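/- For the cooperative Parrondo Markov chain on {0,1}^N with parameters p_0 = 1, p_3 = 0, and N even, the two alternating states 0101⋯01 and 1010⋯10 are absorbing, and (when 0 < p_1 + p_2 < 2 excluding the exceptional cases p_1 = p_2 = 0 and p_1 = p_2 = 1) all other states are transient. -/

import Mathlib

set_option linter.unusedSectionVars false
set_option linter.unusedVariables false

namespace Stmt2

variable {N : ℕ}

/-- `x` with coordinate `i` flipped. -/
def flip (x : Fin N → Bool) (i : Fin N) : Fin N → Bool := Function.update x i (!x i)

/-- `m_i(x) = 2 x_{i-1} + x_{i+1}` with circular indexing. -/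
def mIdx [NeZero N] (x : Fin N → Bool) (i : Fin N) : Fin 4 :=
  (if x (i - 1) then 2 else 0) + (if x (i + 1) then 1 else 0)

/-- flip rate: `p_{m_i(x)}` if `x_i = 0`, `q_{m_i(x)} = 1 - p_{m_i(x)}` if `x_i = 1`. -/
noncomputable def rate [NeZero N] (p : Fin 4 → ℝ) (x : Fin N → Bool) (i : Fin N) : ℝ :=
  if x i then 1 - p (mIdx x i) else p (mIdx x i)

/-- One-step transition matrix of the cooperative Parrondo chain:
`P(x, x^i) = rate/N` and `P(x,x) = (∑_i (1 - rate_i))/N`. -/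
noncomputable def Pmat [NeZero N] (p : Fin 4 → ℝ) : Matrix (Fin N → Bool) (Fin N → Bool) ℝ :=
  fun x y => (∑ i : Fin N, if y = flip x i then rate p x i else 0) / N
    + (if y = x then (∑ i : Fin N, (1 - rate p x i)) / N else 0)

/-- `y` is accessible from `x`. -/
def Accessible [NeZero N] (p : Fin 4 → ℝ) (x y : Fin N → Bool) : Prop :=
  ∃ n : ℕ, 0 < (Pmat p ^ n) x y

/-- Transience of a state of a finite Markov chain, in the standard equivalent form:
some state is accessible from `x` from which `x` is not accessible back. -/
def Transient [NeZero N] (p : Fin 4 → ℝ) (x : Fin N → Bool) : Prop :=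
  ∃ y : Fin N → Bool, Accessible p x y ∧ ¬ Accessible p y x

/-- The alternating state starting with value `b` at index 0. -/
def altStart (N : ℕ) (b : Bool) : Fin N → Bool := fun i => if i.val % 2 = 0 then b else !b

open Fin.NatCast Fin.CommRing

section Basic
variable [NeZero N]

lemma flip_self (x : Fin N → Bool) (i : Fin N) : flip x i i = !x i := by
  simp [flip]

lemma flip_other (x : Fin N → Bool) (i m : Fin N) (h : m ≠ i) : flip x i m = x m := by
  simp [flip, Function.update_of_ne h]

lemma flip_ne (x : Fin N → Bool) (i : Fin N) : flip x i ≠ x := by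
  intro h
  have := congrFun h i
  rw [flip_self] at this
  simp at this

lemma rate_eq_false (p : Fin 4 → ℝ) (x : Fin N → Bool) (i : Fin N) (h : x i = false) :
    rate p x i = p (mIdx x i) := by
  unfold rate; rw [h]; simp

lemma rate_eq_true (p : Fin 4 → ℝ) (x : Fin N → Bool) (i : Fin N) (h : x i = true) :
    rate p x i = 1 - p (mIdx x i) := by
  unfold rate; rw [h]; simp

lemma val_natCast_lt (k : ℕ) (hk : k < N) : ((k : Fin N)).val = k := by
  rw [Fin.val_natCast]; exact Nat.mod_eq_of_lt hk

lemma natCast_ne_zero' {k : ℕ} (h1 : 0 < k) (h2 : k < N) : (k : Fin N) ≠ 0 := by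
  intro h
  have := congrArg Fin.val h
  rw [val_natCast_lt k h2, Fin.val_zero] at this
  omega

lemma one_ne_zero' (hN3 : 3 ≤ N) : (1 : Fin N) ≠ 0 := by
  have : ((1:ℕ) : Fin N) ≠ 0 := natCast_ne_zero' (by omega) (by omega)
  simpa using this

lemma add_one_ne (hN3 : 3 ≤ N) (j : Fin N) : j + 1 ≠ j := by
  intro h
  have : (1 : Fin N) = 0 := by
    have := congrArg (fun z => z - j) h
    simpa [add_comm, add_sub_cancel_right] using this
  exact one_ne_zero' hN3 this

lemma add_cast_ne {k : ℕ} (hN3 : 3 ≤ N) (h1 : 0 < k) (h2 : k < N) (j : Fin N) :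
    j + (k : Fin N) ≠ j := by
  intro h
  have : (k : Fin N) = 0 := by
    have := congrArg (fun z => z - j) h
    simpa [add_comm, add_sub_cancel_right] using this
  exact natCast_ne_zero' h1 h2 this

lemma add_cast_ne_add_one {k : ℕ} (hN3 : 3 ≤ N) (h1 : 2 ≤ k) (h2 : k < N) (j : Fin N) :
    j + (k : Fin N) ≠ j + 1 := by
  intro h
  have hc : (k : Fin N) = 1 := add_left_cancel h
  have := congrArg Fin.val hc
  rw [val_natCast_lt k h2] at this
  have h1v : ((1 : Fin N)).val = 1 := by
    have : ((1:ℕ) : Fin N).val = 1 := val_natCast_lt 1 (by omega)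
    simpa using this
  omega

/-- the set of "equal bonds" -/
def bonds (x : Fin N → Bool) : Finset (Fin N) :=
  Finset.univ.filter (fun j => x j = x (j + 1))

lemma bool_ne_iff {a b : Bool} (h : a ≠ b) : b = !a := by
  cases a <;> cases b <;> simp_all

lemma mem_bonds {x : Fin N → Bool} {j : Fin N} : j ∈ bonds x ↔ x j = x (j + 1) := by
  simp [bonds]

lemma prop_alt (x : Fin N → Bool) (j : Fin N) :
    ∀ m : ℕ, (∀ l : ℕ, l < m → x (j + (l:ℕ) + 1) = !x (j + (l:ℕ))) →
      x (j + (m:ℕ)) = if m % 2 = 0 then x j else !x j := by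
  intro m
  induction m with
  | zero => simp
  | succ m ih =>
    intro h
    have h1 : x (j + (m:ℕ) + 1) = !x (j + (m:ℕ)) := h m (Nat.lt_succ_self m)
    have h2 := ih (fun l hl => h l (hl.trans (Nat.lt_succ_self m)))
    have hcast : ((m+1 : ℕ) : Fin N) = ((m:ℕ) : Fin N) + 1 := by push_cast; ring
    rw [hcast, ← add_assoc, h1, h2]
    rcases Nat.mod_two_eq_zero_or_one m with hm | hm
    · have : (m+1) % 2 = 1 := by omega
      simp [hm, this]
    · have : (m+1) % 2 = 0 := by omega
      simp [hm, this]

lemma no_bonds_alt (x : Fin N → Bool) (h : ∀ j : Fin N, x j ≠ x (j + 1)) :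
    x = altStart N (x 0) := by
  funext i
  have key := prop_alt x 0 i.val (fun l hl => bool_ne_iff (h _))
  rw [zero_add, Fin.cast_val_eq_self] at key
  simpa [altStart] using key

lemma nextBond (hN3 : 3 ≤ N) (hNE : Even N) (x : Fin N → Bool) (j : Fin N)
    (hb : x j = x (j + 1)) :
    ∃ k : ℕ, k + 1 < N ∧ x (j + ((k+1 : ℕ) : Fin N)) = x (j + ((k+1:ℕ) : Fin N) + 1) := by
  by_contra hcon
  push_neg at hcon
  have key := prop_alt x (j + 1) (N - 1) (fun l hl => by
    have hne := hcon l (by omega)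
    have hcast : (j + 1) + (l : Fin N) = j + ((l + 1 : ℕ) : Fin N) := by push_cast; ring
    rw [hcast]
    exact bool_ne_iff hne)
  have hNm : (N - 1) % 2 = 1 := by
    obtain ⟨t, ht⟩ := hNE; omega
  rw [hNm] at key
  have hcast2 : (j + 1) + ((N - 1 : ℕ) : Fin N) = j := by
    have : ((N - 1 : ℕ) : Fin N) = ((N : ℕ) : Fin N) - 1 := by
      rw [Nat.cast_sub (by omega)]; simp
    rw [this, Fin.natCast_self]
    ring
  rw [hcast2] at key
  simp at key
  rw [hb] at key
  simp at key

section CoreCombi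
variable {S : (Fin N → Bool) → (Fin N → Bool) → Prop}
variable (hN3 : 3 ≤ N) (hNE : Even N)
variable (H1 : ∀ x : Fin N → Bool, ∀ i : Fin N, x (i - 1) = x i → x (i + 1) = x i → S x (flip x i))
variable (H2 : ∀ x : Fin N → Bool, ∀ i : Fin N, x (i - 1) = x i → x (i + 1) ≠ x i → S x (flip x i))

include hN3 H1 in
lemma killStep (x : Fin N → Bool) (j : Fin N)
    (hb : x j = x (j + 1)) (hb2 : x (j + 1) = x (j + 1 + 1)) :
    S x (flip x (j + 1)) ∧ (bonds (flip x (j + 1))).card < (bonds x).card := by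
  have hne1 : j + 1 ≠ j := add_one_ne hN3 j
  have hne2 : j + 1 + 1 ≠ j + 1 := add_one_ne hN3 (j + 1)
  constructor
  · exact H1 x (j + 1) (by rw [add_sub_cancel_right]; exact hb) hb2.symm
  · have hsub : bonds (flip x (j + 1)) ⊆ (bonds x).erase j := by
      intro m hm
      rw [mem_bonds] at hm
      rcases eq_or_ne m j with hmj | hmj
      · exfalso
        rw [hmj, flip_other x (j+1) j hne1.symm, flip_self, hb] at hm
        simp at hm
      rcases eq_or_ne m (j + 1) with hmj1 | hmj1
      · exfalso
        rw [hmj1, flip_self, flip_other x (j+1) _ hne2, ← hb2] at hm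
        simp at hm
      · rw [Finset.mem_erase, mem_bonds]
        refine ⟨hmj, ?_⟩
        rw [flip_other x (j+1) m hmj1, flip_other x (j+1) (m+1) (by
          intro h; exact hmj (add_right_cancel h))] at hm
        exact hm
    calc (bonds (flip x (j + 1))).card ≤ ((bonds x).erase j).card := Finset.card_le_card hsub
      _ < (bonds x).card := Finset.card_erase_lt_of_mem (mem_bonds.mpr hb)

include hN3 H2 in
lemma moveStep (x : Fin N → Bool) (j : Fin N)
    (hb : x j = x (j + 1)) (hnb : x (j + 1) ≠ x (j + 1 + 1)) :
    S x (flip x (j + 1)) ∧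
    (flip x (j + 1)) (j + 1) = (flip x (j + 1)) (j + 1 + 1) ∧
    (bonds (flip x (j + 1))).card ≤ (bonds x).card := by
  have hne1 : j + 1 ≠ j := add_one_ne hN3 j
  have hne2 : j + 1 + 1 ≠ j + 1 := add_one_ne hN3 (j + 1)
  refine ⟨H2 x (j + 1) (by rw [add_sub_cancel_right]; exact hb) (fun h => hnb h.symm), ?_, ?_⟩
  · rw [flip_self, flip_other x (j+1) _ hne2]
    exact (bool_ne_iff hnb).symm
  · have hsub : bonds (flip x (j + 1)) ⊆ insert (j + 1) ((bonds x).erase j) := by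
      intro m hm
      rw [mem_bonds] at hm
      rcases eq_or_ne m (j + 1) with hmj1 | hmj1
      · rw [hmj1]; exact Finset.mem_insert_self _ _
      rcases eq_or_ne m j with hmj | hmj
      · exfalso
        rw [hmj, flip_other x (j+1) j hne1.symm, flip_self, hb] at hm
        simp at hm
      · apply Finset.mem_insert_of_mem
        rw [Finset.mem_erase, mem_bonds]
        refine ⟨hmj, ?_⟩
        rw [flip_other x (j+1) m hmj1, flip_other x (j+1) (m+1) (by
          intro h; exact hmj (add_right_cancel h))] at hm
        exact hm
    have h1 : (bonds x).card ≥ 1 := Finset.card_pos.mpr ⟨j, mem_bonds.mpr hb⟩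
    have h2 : ((bonds x).erase j).card = (bonds x).card - 1 :=
      Finset.card_erase_of_mem (mem_bonds.mpr hb)
    calc (bonds (flip x (j + 1))).card ≤ (insert (j + 1) ((bonds x).erase j)).card :=
          Finset.card_le_card hsub
      _ ≤ ((bonds x).erase j).card + 1 := Finset.card_insert_le _ _
      _ ≤ (bonds x).card := by omega

include hN3 H1 H2 in
lemma travel : ∀ k : ℕ, ∀ x : Fin N → Bool, ∀ j : Fin N, k + 1 < N →
    x j = x (j + 1) →
    x (j + ((k + 1 : ℕ) : Fin N)) = x (j + ((k + 1 : ℕ) : Fin N) + 1) →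
    ∃ y, Relation.ReflTransGen S x y ∧ (bonds y).card < (bonds x).card := by
  intro k
  induction k with
  | zero =>
    intro x j hlt hb htgt
    have hc : ((1 : ℕ) : Fin N) = 1 := Nat.cast_one
    rw [hc] at htgt
    obtain ⟨hs, hcard⟩ := killStep hN3 H1 x j hb htgt
    exact ⟨_, Relation.ReflTransGen.single hs, hcard⟩
  | succ k ih =>
    intro x j hlt hb htgt
    by_cases hnb : x (j + 1) = x (j + 1 + 1)
    · obtain ⟨hs, hcard⟩ := killStep hN3 H1 x j hb hnb
      exact ⟨_, Relation.ReflTransGen.single hs, hcard⟩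
    · obtain ⟨hs, hnewb, hcard⟩ := moveStep hN3 H2 x j hb hnb
      have hm1 : j + ((k + 2 : ℕ) : Fin N) ≠ j + 1 :=
        add_cast_ne_add_one hN3 (by omega) (by omega) j
      have hm2 : j + ((k + 2 : ℕ) : Fin N) + 1 ≠ j + 1 := by
        intro h
        exact add_cast_ne hN3 (by omega) (by omega) j (add_right_cancel h)
      have htgt' : flip x (j+1) (j + ((k + 2 : ℕ) : Fin N)) =
          flip x (j+1) (j + ((k + 2 : ℕ) : Fin N) + 1) := by
        rw [flip_other x (j+1) _ hm1, flip_other x (j+1) _ hm2]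
        rw [show ((k + 2 : ℕ) : Fin N) = ((k + 1 + 1 : ℕ) : Fin N) by push_cast; ring]
        exact htgt
      have hre : (j + 1) + ((k + 1 : ℕ) : Fin N) = j + ((k + 2 : ℕ) : Fin N) := by
        push_cast
        ring
      obtain ⟨z, hz, hcz⟩ := ih (flip x (j+1)) (j + 1) (by omega) hnewb
        (by rw [hre]; exact htgt')
      exact ⟨z, Relation.ReflTransGen.head hs hz, lt_of_lt_of_le hcz hcard⟩

include hN3 hNE H1 H2 in
lemma coreAux : ∀ n : ℕ, ∀ x : Fin N → Bool, (bonds x).card ≤ n →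
    ∃ b, Relation.ReflTransGen S x (altStart N b) := by
  intro n
  induction n with
  | zero =>
    intro x hx
    have hemp : bonds x = ∅ := Finset.card_eq_zero.mp (Nat.le_zero.mp hx)
    have hnb : ∀ j : Fin N, x j ≠ x (j + 1) := by
      intro j hj
      have : j ∈ bonds x := mem_bonds.mpr hj
      rw [hemp] at this
      exact absurd this (Finset.notMem_empty j)
    exact ⟨x 0, by rw [← no_bonds_alt x hnb]⟩
  | succ n ih =>
    intro x hx
    rcases (bonds x).eq_empty_or_nonempty with hemp | ⟨j, hj⟩
    · have hnb : ∀ j : Fin N, x j ≠ x (j + 1) := by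
        intro j hj
        have : j ∈ bonds x := mem_bonds.mpr hj
        rw [hemp] at this
        exact absurd this (Finset.notMem_empty j)
      exact ⟨x 0, by rw [← no_bonds_alt x hnb]⟩
    · have hb := mem_bonds.mp hj
      obtain ⟨k, hk, htgt⟩ := nextBond hN3 hNE x j hb
      obtain ⟨y, hxy, hcard⟩ := travel hN3 H1 H2 k x j hk hb htgt
      obtain ⟨b, hyb⟩ := ih y (by omega)
      exact ⟨b, hxy.trans hyb⟩

end CoreCombi

section Rev

def rev (x : Fin N → Bool) : Fin N → Bool := fun i => x (-i)

lemma rev_apply (x : Fin N → Bool) (i : Fin N) : rev x i = x (-i) := rfl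

lemma rev_rev (x : Fin N → Bool) : rev (rev x) = x := funext fun i => by simp [rev]

lemma rev_flip (x : Fin N → Bool) (i : Fin N) : rev (flip x i) = flip (rev x) (-i) := by
  funext m
  by_cases h : m = -i
  · subst h
    show flip x i (-(-i)) = flip (rev x) (-i) (-i)
    rw [flip_self, neg_neg, flip_self, rev_apply, neg_neg]
  · have h' : -m ≠ i := fun hh => h (by rw [← hh, neg_neg])
    show flip x i (-m) = flip (rev x) (-i) m
    rw [flip_other x i _ h', flip_other _ _ _ h, rev_apply]

lemma neg_val_parity (hNE : Even N) (i : Fin N) : (-i).val % 2 = i.val % 2 := by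
  have h0 : (-i + i) = 0 := neg_add_cancel i
  have hv : ((-i).val + i.val) % N = 0 := by
    have := congrArg Fin.val h0
    rwa [Fin.val_add, Fin.val_zero] at this
  have h1 : (-i).val < N := (-i).isLt
  have h2 : i.val < N := i.isLt
  have hN0 : 0 < N := Nat.pos_of_ne_zero (NeZero.ne N)
  have hd : N ∣ ((-i).val + i.val) := Nat.dvd_of_mod_eq_zero hv
  obtain ⟨c, hc⟩ := hd
  have hc2 : c < 2 := by
    by_contra hcc
    push_neg at hcc
    have : 2 * N ≤ N * c := by
      calc 2 * N = N * 2 := by ring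
        _ ≤ N * c := Nat.mul_le_mul_left N hcc
    omega
  obtain ⟨t, ht⟩ := hNE
  interval_cases c <;> omega

lemma rev_alt (hNE : Even N) (b : Bool) : rev (altStart N b) = altStart N b := by
  funext i
  show altStart N b (-i) = altStart N b i
  simp only [altStart, neg_val_parity hNE i]

lemma alt_succ (hN3 : 3 ≤ N) (hNE : Even N) (b : Bool) (i : Fin N) :
    altStart N b (i + 1) = !altStart N b i := by
  have h1v : ((1 : Fin N)).val = 1 := by
    have : ((1:ℕ) : Fin N).val = 1 := val_natCast_lt 1 (by omega)
    simpa using this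
  have hval : (i + 1).val = (i.val + 1) % N := by rw [Fin.val_add, h1v]
  have h2 : (i + 1).val % 2 = (i.val + 1) % 2 := by
    rw [hval]
    exact Nat.mod_mod_of_dvd _ hNE.two_dvd
  simp only [altStart]
  rcases Nat.mod_two_eq_zero_or_one i.val with hm | hm
  · have h3 : (i + 1).val % 2 = 1 := by omega
    simp [hm, h3]
  · have h3 : (i + 1).val % 2 = 0 := by omega
    simp [hm, h3]

lemma alt_pred (hN3 : 3 ≤ N) (hNE : Even N) (b : Bool) (i : Fin N) :
    altStart N b (i - 1) = !altStart N b i := by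
  have h := alt_succ hN3 hNE b (i - 1)
  rw [sub_add_cancel] at h
  rw [h, Bool.not_not]

end Rev

section Prob
variable (p : Fin 4 → ℝ)

/-- single positive-rate flip step -/
def Step (p : Fin 4 → ℝ) (x y : Fin N → Bool) : Prop :=
  ∃ i, y = flip x i ∧ 0 < rate p x i

lemma hookAB (hp0 : p 0 = 1) (hp3 : p 3 = 0) :
    ∀ x : Fin N → Bool, ∀ i : Fin N, x (i - 1) = x i → x (i + 1) = x i →
      Step p x (flip x i) := by
  intro x i h1 h2
  refine ⟨i, rfl, ?_⟩
  cases hxi : x i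
  · have hl : x (i - 1) = false := by rw [h1, hxi]
    have hr : x (i + 1) = false := by rw [h2, hxi]
    have hmv : mIdx x i = 0 := by unfold mIdx; rw [hl, hr]; decide
    rw [rate_eq_false p x i hxi, hmv, hp0]
    norm_num
  · have hl : x (i - 1) = true := by rw [h1, hxi]
    have hr : x (i + 1) = true := by rw [h2, hxi]
    have hmv : mIdx x i = 3 := by unfold mIdx; rw [hl, hr]; decide
    rw [rate_eq_true p x i hxi, hmv, hp3]
    norm_num

lemma hookMoveR (hp1 : 0 < p 1) (hp2 : p 2 < 1) :
    ∀ x : Fin N → Bool, ∀ i : Fin N, x (i - 1) = x i → x (i + 1) ≠ x i →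
      Step p x (flip x i) := by
  intro x i h1 h2
  refine ⟨i, rfl, ?_⟩
  have h2' : x (i + 1) = !x i := bool_ne_iff (fun hh => h2 hh.symm)
  cases hxi : x i
  · have hl : x (i - 1) = false := by rw [h1, hxi]
    have hr : x (i + 1) = true := by rw [h2', hxi]; rfl
    have hmv : mIdx x i = 1 := by unfold mIdx; rw [hl, hr]; decide
    rw [rate_eq_false p x i hxi, hmv]
    exact hp1
  · have hl : x (i - 1) = true := by rw [h1, hxi]
    have hr : x (i + 1) = false := by rw [h2', hxi]; rfl
    have hmv : mIdx x i = 2 := by unfold mIdx; rw [hl, hr]; decide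
    rw [rate_eq_true p x i hxi, hmv]
    linarith

lemma hookABrev (hp0 : p 0 = 1) (hp3 : p 3 = 0) :
    ∀ x : Fin N → Bool, ∀ i : Fin N, x (i - 1) = x i → x (i + 1) = x i →
      Step p (rev x) (rev (flip x i)) := by
  intro x i h1 h2
  rw [rev_flip]
  refine ⟨-i, rfl, ?_⟩
  have hvc : rev x (-i) = x i := by show x (-(-i)) = x i; rw [neg_neg]
  have hvl : rev x (-i - 1) = x (i + 1) := by
    show x (-(-i - 1)) = x (i + 1); rw [show -(-i - 1) = i + 1 by ring]
  have hvr : rev x (-i + 1) = x (i - 1) := by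
    show x (-(-i + 1)) = x (i - 1); rw [show -(-i + 1) = i - 1 by ring]
  cases hxi : x i
  · have hl : rev x (-i - 1) = false := by rw [hvl, h2, hxi]
    have hr : rev x (-i + 1) = false := by rw [hvr, h1, hxi]
    have hc : rev x (-i) = false := by rw [hvc, hxi]
    have hmv : mIdx (rev x) (-i) = 0 := by unfold mIdx; rw [hl, hr]; decide
    rw [rate_eq_false p (rev x) (-i) hc, hmv, hp0]
    norm_num
  · have hl : rev x (-i - 1) = true := by rw [hvl, h2, hxi]
    have hr : rev x (-i + 1) = true := by rw [hvr, h1, hxi]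
    have hc : rev x (-i) = true := by rw [hvc, hxi]
    have hmv : mIdx (rev x) (-i) = 3 := by unfold mIdx; rw [hl, hr]; decide
    rw [rate_eq_true p (rev x) (-i) hc, hmv, hp3]
    norm_num

lemma hookMoveRev (hp2 : 0 < p 2) (hp1 : p 1 < 1) :
    ∀ x : Fin N → Bool, ∀ i : Fin N, x (i - 1) = x i → x (i + 1) ≠ x i →
      Step p (rev x) (rev (flip x i)) := by
  intro x i h1 h2
  rw [rev_flip]
  refine ⟨-i, rfl, ?_⟩
  have h2' : x (i + 1) = !x i := bool_ne_iff (fun hh => h2 hh.symm)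
  have hvc : rev x (-i) = x i := by show x (-(-i)) = x i; rw [neg_neg]
  have hvl : rev x (-i - 1) = x (i + 1) := by
    show x (-(-i - 1)) = x (i + 1); rw [show -(-i - 1) = i + 1 by ring]
  have hvr : rev x (-i + 1) = x (i - 1) := by
    show x (-(-i + 1)) = x (i - 1); rw [show -(-i + 1) = i - 1 by ring]
  cases hxi : x i
  · have hl : rev x (-i - 1) = true := by rw [hvl, h2', hxi]; rfl
    have hr : rev x (-i + 1) = false := by rw [hvr, h1, hxi]
    have hc : rev x (-i) = false := by rw [hvc, hxi]
    have hmv : mIdx (rev x) (-i) = 2 := by unfold mIdx; rw [hl, hr]; decide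
    rw [rate_eq_false p (rev x) (-i) hc, hmv]
    exact hp2
  · have hl : rev x (-i - 1) = false := by rw [hvl, h2', hxi]; rfl
    have hr : rev x (-i + 1) = true := by rw [hvr, h1, hxi]
    have hc : rev x (-i) = true := by rw [hvc, hxi]
    have hmv : mIdx (rev x) (-i) = 1 := by unfold mIdx; rw [hl, hr]; decide
    rw [rate_eq_true p (rev x) (-i) hc, hmv]
    linarith

lemma reach_alt (hN3 : 3 ≤ N) (hNE : Even N) (hp0 : p 0 = 1) (hp3 : p 3 = 0)
    (hkit : (0 < p 1 ∧ p 2 < 1) ∨ (0 < p 2 ∧ p 1 < 1)) (x : Fin N → Bool) :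
    ∃ b, Relation.ReflTransGen (Step p) x (altStart N b) := by
  rcases hkit with ⟨h1, h2⟩ | ⟨h1, h2⟩
  · exact coreAux hN3 hNE (hookAB p hp0 hp3) (hookMoveR p h1 h2) (bonds x).card x le_rfl
  · obtain ⟨b, hb⟩ := coreAux (S := fun u v => Step p (rev u) (rev v)) hN3 hNE
      (hookABrev p hp0 hp3) (hookMoveRev p h1 h2) (bonds (rev x)).card (rev x) le_rfl
    refine ⟨b, ?_⟩
    have hlift : Relation.ReflTransGen (Step p) (rev (rev x)) (rev (altStart N b)) :=
      Relation.ReflTransGen.lift (p := Step p) rev (fun a b hr => hr) _ _ hb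
    rwa [rev_rev, rev_alt hNE] at hlift

lemma rate_nonneg (hp : ∀ m, p m ∈ Set.Icc (0:ℝ) 1) (x : Fin N → Bool) (i : Fin N) :
    0 ≤ rate p x i := by
  unfold rate
  rcases hp (mIdx x i) with ⟨h0, h1⟩
  split <;> linarith

lemma rate_le_one (hp : ∀ m, p m ∈ Set.Icc (0:ℝ) 1) (x : Fin N → Bool) (i : Fin N) :
    rate p x i ≤ 1 := by
  unfold rate
  rcases hp (mIdx x i) with ⟨h0, h1⟩
  split <;> linarith

lemma Pmat_nonneg (hp : ∀ m, p m ∈ Set.Icc (0:ℝ) 1) (x y : Fin N → Bool) :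
    0 ≤ Pmat p x y := by
  unfold Pmat
  have hN0 : (0:ℝ) ≤ N := Nat.cast_nonneg N
  apply add_nonneg
  · apply div_nonneg _ hN0
    apply Finset.sum_nonneg
    intro i _
    split
    · exact rate_nonneg p hp x i
    · exact le_rfl
  · split
    · apply div_nonneg _ hN0
      apply Finset.sum_nonneg
      intro i _
      have := rate_le_one p hp x i
      linarith
    · exact le_rfl

lemma pow_entry_nonneg (hp : ∀ m, p m ∈ Set.Icc (0:ℝ) 1) :
    ∀ n : ℕ, ∀ x y : Fin N → Bool, 0 ≤ (Pmat p ^ n) x y := by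
  intro n
  induction n with
  | zero =>
    intro x y
    rw [pow_zero]
    rw [Matrix.one_apply]
    split <;> norm_num
  | succ n ih =>
    intro x y
    rw [pow_succ, Matrix.mul_apply]
    exact Finset.sum_nonneg fun j _ => mul_nonneg (ih x j) (Pmat_nonneg p hp j y)

lemma Pmat_step_pos (x : Fin N → Bool) (i : Fin N) (h : 0 < rate p x i) :
    0 < Pmat p x (flip x i) := by
  unfold Pmat
  rw [if_neg (flip_ne x i)]
  have hsum : (∑ j : Fin N, if flip x i = flip x j then rate p x j else 0) = rate p x i := by
    rw [Finset.sum_eq_single i]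
    · rw [if_pos rfl]
    · intro j _ hj
      rw [if_neg]
      intro hflip
      have hcf := congrFun hflip j
      rw [flip_self, flip_other x i j hj] at hcf
      simp at hcf
    · intro hmem
      exact absurd (Finset.mem_univ i) hmem
  rw [hsum, add_zero]
  have hN0 : (0:ℝ) < N := by
    exact_mod_cast Nat.pos_of_ne_zero (NeZero.ne N)
  positivity

lemma accessible_refl (x : Fin N → Bool) : Accessible p x x :=
  ⟨0, by rw [pow_zero, Matrix.one_apply_eq]; norm_num⟩

lemma accessible_head (hp : ∀ m, p m ∈ Set.Icc (0:ℝ) 1) {x y z : Fin N → Bool}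
    (h1 : 0 < Pmat p x y) (h2 : Accessible p y z) : Accessible p x z := by
  obtain ⟨n, hn⟩ := h2
  refine ⟨n + 1, ?_⟩
  rw [pow_succ', Matrix.mul_apply]
  apply Finset.sum_pos'
  · intro w _
    exact mul_nonneg (Pmat_nonneg p hp x w) (pow_entry_nonneg p hp n w z)
  · exact ⟨y, Finset.mem_univ y, mul_pos h1 hn⟩

lemma access_of_reach (hp : ∀ m, p m ∈ Set.Icc (0:ℝ) 1) {x y : Fin N → Bool}
    (h : Relation.ReflTransGen (Step p) x y) : Accessible p x y := by
  induction h using Relation.ReflTransGen.head_induction_on with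
  | refl => exact accessible_refl p _
  | head hstep _ ih =>
    obtain ⟨i, rfl, hr⟩ := hstep
    exact accessible_head p hp (Pmat_step_pos p _ i hr) ih

lemma rate_alt_zero (hN3 : 3 ≤ N) (hNE : Even N) (hp0 : p 0 = 1) (hp3 : p 3 = 0)
    (b : Bool) (i : Fin N) : rate p (altStart N b) i = 0 := by
  have hm : altStart N b (i - 1) = !altStart N b i := alt_pred hN3 hNE b i
  have hpl : altStart N b (i + 1) = !altStart N b i := alt_succ hN3 hNE b i
  unfold rate mIdx
  rw [hm, hpl]
  cases hxi : altStart N b i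
  · rw [if_neg (by simp), if_pos (by simp), if_pos (by simp)]
    rw [show ((2 : Fin 4) + 1) = 3 by decide, hp3]
  · rw [if_pos rfl, if_neg (by simp), if_neg (by simp)]
    rw [show ((0 : Fin 4) + 0) = 0 from rfl, hp0]
    ring

lemma Pmat_alt_self (hN3 : 3 ≤ N) (hNE : Even N) (hp0 : p 0 = 1) (hp3 : p 3 = 0)
    (b : Bool) : Pmat p (altStart N b) (altStart N b) = 1 := by
  unfold Pmat
  rw [if_pos rfl]
  have h1 : ∀ i : Fin N,
      (if altStart N b = flip (altStart N b) i then rate p (altStart N b) i else 0) = 0 := by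
    intro i
    rw [rate_alt_zero p hN3 hNE hp0 hp3 b i]
    split <;> rfl
  have h2 : ∀ i : Fin N, (1 - rate p (altStart N b) i) = 1 := by
    intro i
    rw [rate_alt_zero p hN3 hNE hp0 hp3 b i]
    ring
  rw [Finset.sum_congr rfl (fun i _ => h1 i), Finset.sum_congr rfl (fun i _ => h2 i)]
  have hNne : (N:ℝ) ≠ 0 := Nat.cast_ne_zero.mpr (NeZero.ne N)
  simp [Finset.sum_const, Finset.card_univ, hNne]

lemma Pmat_alt_off (hN3 : 3 ≤ N) (hNE : Even N) (hp0 : p 0 = 1) (hp3 : p 3 = 0)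
    (b : Bool) (z : Fin N → Bool) (hz : z ≠ altStart N b) :
    Pmat p (altStart N b) z = 0 := by
  unfold Pmat
  rw [if_neg hz]
  have h1 : ∀ i : Fin N,
      (if z = flip (altStart N b) i then rate p (altStart N b) i else 0) = 0 := by
    intro i
    rw [rate_alt_zero p hN3 hNE hp0 hp3 b i]
    split <;> rfl
  rw [Finset.sum_congr rfl (fun i _ => h1 i)]
  simp

lemma pow_alt_off (hN3 : 3 ≤ N) (hNE : Even N) (hp0 : p 0 = 1) (hp3 : p 3 = 0)
    (b : Bool) : ∀ n : ℕ, ∀ z : Fin N → Bool, z ≠ altStart N b →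
      (Pmat p ^ n) (altStart N b) z = 0 := by
  intro n
  induction n with
  | zero =>
    intro z hz
    rw [pow_zero]
    exact Matrix.one_apply_ne (Ne.symm hz)
  | succ n ih =>
    intro z hz
    rw [pow_succ', Matrix.mul_apply]
    apply Finset.sum_eq_zero
    intro w _
    rcases eq_or_ne w (altStart N b) with rfl | hw
    · rw [ih z hz, mul_zero]
    · rw [Pmat_alt_off p hN3 hNE hp0 hp3 b w hw, zero_mul]

lemma not_accessible_alt (hN3 : 3 ≤ N) (hNE : Even N) (hp0 : p 0 = 1) (hp3 : p 3 = 0)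
    (b : Bool) (x : Fin N → Bool) (hx : x ≠ altStart N b) :
    ¬ Accessible p (altStart N b) x := by
  rintro ⟨n, hn⟩
  rw [pow_alt_off p hN3 hNE hp0 hp3 b n x hx] at hn
  exact lt_irrefl 0 hn

end Prob

end Basic

/-- for `p_0 = 1`, `p_3 = 0`, `N` even, the two alternating states
`0101⋯01` and `1010⋯10` are absorbing, and when `0 < p_1 + p_2 < 2`
(equivalently, excluding `p_1 = p_2 = 0` and `p_1 = p_2 = 1`) all other states
are transient. -/
theorem stmt_2 [NeZero N] (hN : 3 ≤ N) (hNeven : Even N)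
    (p : Fin 4 → ℝ) (hp : ∀ m, p m ∈ Set.Icc (0:ℝ) 1)
    (hp0 : p 0 = 1) (hp3 : p 3 = 0)
    (hsum_pos : 0 < p 1 + p 2) (hsum_lt : p 1 + p 2 < 2) :
    (∀ b : Bool, Pmat p (altStart N b) (altStart N b) = 1) ∧
    (∀ x : Fin N → Bool, x ≠ altStart N true → x ≠ altStart N false →
      Transient p x) := by
  constructor
  · intro b
    exact Pmat_alt_self p hN hNeven hp0 hp3 b
  · intro x hx1 hx0
    rcases hp 1 with ⟨a1, b1⟩
    rcases hp 2 with ⟨a2, b2⟩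
    have hkit : (0 < p 1 ∧ p 2 < 1) ∨ (0 < p 2 ∧ p 1 < 1) := by
      rcases lt_or_ge (p 1) 1 with hA | hA
      · rcases lt_or_ge 0 (p 2) with hB | hB
        · right; exact ⟨hB, hA⟩
        · left; constructor <;> linarith
      · left; constructor <;> linarith
    obtain ⟨b, hreach⟩ := reach_alt p hN hNeven hp0 hp3 hkit x
    refine ⟨altStart N b, access_of_reach p hp hreach, ?_⟩
    apply not_accessible_alt p hN hNeven hp0 hp3 b x
    cases b
    · exact hx0
    · exact hx1

end Stmt2
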